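/- Let Γ be a compact subgroup of GL_2(K) for K a local field, acting by conjugation on Ad = M_2(K), and suppose Γ ∩ SL_2(K) is Zariski dense in SL_2 over K. Then the Γ-fixed points of Ad/Z are zero, where Z is the scalar matrices: (Ad/Z)^Γ = 0. -/

import Mathlib

/-- A subset `S` of `M₂(K)` (consisting of determinant-1 matrices) is Zariski dense in the
`K`-variety `SL₂`: every polynomial in the matrix entries vanishing on `S` vanishes on all of
`SL₂(K̄)`. -/
def statement14ZariskiDenseInSL2 (K : Type*) [Field K]
    (S : Set (Matrix (Fin 2) (Fin 2) K)) : Prop :=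
  ∀ f : MvPolynomial (Fin 2 × Fin 2) K,
    (∀ g ∈ S, MvPolynomial.eval (fun q => g q.1 q.2) f = 0) →
    ∀ h : Matrix (Fin 2) (Fin 2) (AlgebraicClosure K), h.det = 1 →
      MvPolynomial.aeval (fun q => h q.1 q.2) f = 0

/-- Let `Γ` be a compact subgroup of `GL₂(K)` for `K` a local field (a locally compact
topological field), acting by conjugation on `Ad = M₂(K)`, and suppose `Γ ∩ SL₂(K)` is
Zariski dense in `SL₂` over `K`. Then `(Ad/Z)^Γ = 0`, where `Z` is the scalar matrices:
any `X` whose image in `Ad/Z` is fixed by `Γ` is itself scalar. -/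
theorem statement14 {K : Type*} [Field K] [TopologicalSpace K] [IsTopologicalRing K]
    [LocallyCompactSpace K]
    (Γ : Subgroup (Matrix (Fin 2) (Fin 2) K)ˣ)
    (hcompact : IsCompact (Γ : Set (Matrix (Fin 2) (Fin 2) K)ˣ))
    (hdense : statement14ZariskiDenseInSL2 K
      {m : Matrix (Fin 2) (Fin 2) K | ∃ g ∈ Γ, (g : Matrix (Fin 2) (Fin 2) K) = m ∧ m.det = 1})
    (X : Matrix (Fin 2) (Fin 2) K)
    (hX : ∀ g ∈ Γ, ∃ z : K,
      (g : Matrix (Fin 2) (Fin 2) K) * X * ((g⁻¹ : (Matrix (Fin 2) (Fin 2) K)ˣ) : Matrix (Fin 2) (Fin 2) K) - X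
        = z • (1 : Matrix (Fin 2) (Fin 2) K)) :
    ∃ z : K, X = z • (1 : Matrix (Fin 2) (Fin 2) K) := by
  classical
  -- Key identity: for g ∈ Γ with det 1, g * X * adjugate g = X + z • 1, so the
  -- off-diagonal entries of g * X * adjugate g agree with those of X.
  have key : ∀ g : (Matrix (Fin 2) (Fin 2) K)ˣ, g ∈ Γ →
      (g : Matrix (Fin 2) (Fin 2) K).det = 1 →
      ∃ z : K, (g : Matrix (Fin 2) (Fin 2) K) * X *
        ((g : Matrix (Fin 2) (Fin 2) K)).adjugate = X + z • 1 := by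
    intro g hg hdet
    obtain ⟨z, hz⟩ := hX g hg
    refine ⟨z, ?_⟩
    have hinv : ((g⁻¹ : (Matrix (Fin 2) (Fin 2) K)ˣ) : Matrix (Fin 2) (Fin 2) K) *
        (g : Matrix (Fin 2) (Fin 2) K) = 1 := by
      rw [← Units.val_mul, inv_mul_cancel, Units.val_one]
    have h1 : (g : Matrix (Fin 2) (Fin 2) K) * X *
        ((g⁻¹ : (Matrix (Fin 2) (Fin 2) K)ˣ) : Matrix (Fin 2) (Fin 2) K) = X + z • 1 := by
      rw [sub_eq_iff_eq_add] at hz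
      rw [hz, add_comm]
    have h2 : (g : Matrix (Fin 2) (Fin 2) K) * X =
        (X + z • 1) * (g : Matrix (Fin 2) (Fin 2) K) := by
      have := congrArg (· * (g : Matrix (Fin 2) (Fin 2) K)) h1
      simpa only [mul_assoc, hinv, mul_one] using this
    calc (g : Matrix (Fin 2) (Fin 2) K) * X * ((g : Matrix (Fin 2) (Fin 2) K)).adjugate
        = (X + z • 1) * ((g : Matrix (Fin 2) (Fin 2) K) *
            ((g : Matrix (Fin 2) (Fin 2) K)).adjugate) := by rw [← mul_assoc, ← h2]
      _ = X + z • 1 := by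
          rw [Matrix.mul_adjugate, hdet, one_smul, mul_one]
  -- Abbreviations for the entries of X over the algebraic closure.
  set e : K →+* AlgebraicClosure K := algebraMap K (AlgebraicClosure K) with he
  -- First polynomial: the (0,1)-entry condition.
  have hf1 : ∀ h : Matrix (Fin 2) (Fin 2) (AlgebraicClosure K), h.det = 1 →
      (h 0 0)^2 * e (X 0 1) + h 0 0 * h 0 1 * e (X 1 1 - X 0 0)
        - (h 0 1)^2 * e (X 1 0) - e (X 0 1) = 0 := by
    intro h hdet
    have := hdense
      ((MvPolynomial.X (0,0))^2 * MvPolynomial.C (X 0 1)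
        + MvPolynomial.X (0,0) * MvPolynomial.X (0,1) * MvPolynomial.C (X 1 1 - X 0 0)
        - (MvPolynomial.X (0,1))^2 * MvPolynomial.C (X 1 0) - MvPolynomial.C (X 0 1))
      ?_ h hdet
    · simpa [MvPolynomial.aeval_X, MvPolynomial.aeval_C, he] using this
    · rintro m ⟨g, hg, rfl, hdet'⟩
      obtain ⟨z, hz⟩ := key g hg hdet'
      have h01 := congrFun (congrFun hz 0) 1
      simp [Matrix.mul_apply, Matrix.adjugate_fin_two, Fin.sum_univ_two,
        Matrix.add_apply, Matrix.smul_apply, Matrix.one_apply] at h01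
      simp only [MvPolynomial.eval_sub, MvPolynomial.eval_add, MvPolynomial.eval_mul,
        MvPolynomial.eval_pow, MvPolynomial.eval_X, MvPolynomial.eval_C]
      linear_combination h01
  -- Second polynomial: the (1,0)-entry condition.
  have hf2 : ∀ h : Matrix (Fin 2) (Fin 2) (AlgebraicClosure K), h.det = 1 →
      (h 1 1)^2 * e (X 1 0) + h 1 0 * h 1 1 * e (X 0 0 - X 1 1)
        - (h 1 0)^2 * e (X 0 1) - e (X 1 0) = 0 := by
    intro h hdet
    have := hdense
      ((MvPolynomial.X (1,1))^2 * MvPolynomial.C (X 1 0)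
        + MvPolynomial.X (1,0) * MvPolynomial.X (1,1) * MvPolynomial.C (X 0 0 - X 1 1)
        - (MvPolynomial.X (1,0))^2 * MvPolynomial.C (X 0 1) - MvPolynomial.C (X 1 0))
      ?_ h hdet
    · simpa [MvPolynomial.aeval_X, MvPolynomial.aeval_C, he] using this
    · rintro m ⟨g, hg, rfl, hdet'⟩
      obtain ⟨z, hz⟩ := key g hg hdet'
      have h10 := congrFun (congrFun hz 1) 0
      simp [Matrix.mul_apply, Matrix.adjugate_fin_two, Fin.sum_univ_two,
        Matrix.add_apply, Matrix.smul_apply, Matrix.one_apply] at h10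
      simp only [MvPolynomial.eval_sub, MvPolynomial.eval_add, MvPolynomial.eval_mul,
        MvPolynomial.eval_pow, MvPolynomial.eval_X, MvPolynomial.eval_C]
      linear_combination h10
  -- Use upper unipotent matrices !![1, t; 0, 1].
  have hupper : ∀ t : AlgebraicClosure K,
      t * e (X 1 1 - X 0 0) - t^2 * e (X 1 0) = 0 := by
    intro t
    have hdet : (!![1, t; 0, 1] : Matrix (Fin 2) (Fin 2) (AlgebraicClosure K)).det = 1 := by
      simp [Matrix.det_fin_two_of]
    have := hf1 !![1, t; 0, 1] hdet
    simp only [Matrix.cons_val', Matrix.cons_val_zero, Matrix.cons_val_one, Matrix.head_cons,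
      Matrix.vecHead, Matrix.vecTail, Matrix.empty_val', Matrix.cons_val_fin_one,
      Matrix.of_apply] at this
    linear_combination this
  have hlower : ∀ t : AlgebraicClosure K,
      t * e (X 0 0 - X 1 1) - t^2 * e (X 0 1) = 0 := by
    intro t
    have hdet : (!![1, 0; t, 1] : Matrix (Fin 2) (Fin 2) (AlgebraicClosure K)).det = 1 := by
      simp [Matrix.det_fin_two_of]
    have := hf2 !![1, 0; t, 1] hdet
    simp only [Matrix.cons_val', Matrix.cons_val_zero, Matrix.cons_val_one, Matrix.head_cons,
      Matrix.vecHead, Matrix.vecTail, Matrix.empty_val', Matrix.cons_val_fin_one,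
      Matrix.of_apply] at this
    linear_combination this
  -- Pick τ ≠ 0, 1 in the algebraic closure.
  obtain ⟨τ, hτ⟩ := Infinite.exists_notMem_finset ({0, 1} : Finset (AlgebraicClosure K))
  simp only [Finset.mem_insert, Finset.mem_singleton, not_or] at hτ
  obtain ⟨hτ0, hτ1⟩ := hτ
  have einj : Function.Injective e := e.injective
  -- From the upper unipotent equations, X 1 0 = 0 and X 1 1 = X 0 0.
  have h1 := hupper 1
  have hτu := hupper τ
  have hc : e (X 1 0) = 0 := by
    have hda : e (X 1 1 - X 0 0) = e (X 1 0) := by linear_combination h1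
    rw [hda] at hτu
    have : τ * (1 - τ) * e (X 1 0) = 0 := by linear_combination hτu
    rcases mul_eq_zero.mp this with h | h
    · rcases mul_eq_zero.mp h with h' | h'
      · exact absurd h' hτ0
      · exact absurd (by linear_combination -h' : τ = 1) hτ1
    · exact h
  have hX10 : X 1 0 = 0 := by
    apply einj; rw [hc, map_zero]
  have hda : X 1 1 = X 0 0 := by
    apply einj
    have : e (X 1 1 - X 0 0) = 0 := by
      have := hupper 1
      rw [hc] at this
      linear_combination this
    rw [map_sub, sub_eq_zero] at this
    exact this
  -- From the lower unipotent equation at t = 1, X 0 1 = 0.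
  have hX01 : X 0 1 = 0 := by
    apply einj
    have := hlower 1
    rw [map_zero]
    have h00 : e (X 0 0 - X 1 1) = 0 := by
      rw [map_sub, hda, sub_self]
    rw [h00] at this
    linear_combination -this
  refine ⟨X 0 0, ?_⟩
  ext i j
  fin_cases i <;> fin_cases j <;>
    simp [Matrix.smul_apply, Matrix.one_apply, hX10, hX01, hda]
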